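/- Let A, B, C, α be T-periodic continuous matrix-valued (resp. scalar for α, with α(t) > 0) functions, and let P, Q be T-periodic solutions of P'(t) = A(t)P(t) + P(t)A(t)ᵀ + α(t)P(t) + (1/α(t))B(t)B(t)ᵀ and −Q'(t) = Q(t)A(t) + A(t)ᵀQ(t) + α(t)Q(t) + C(t)ᵀC(t). Then (1/T)∫₀ᵀ trace(C(t)P(t)C(t)ᵀ) dt = (1/T)∫₀ᵀ trace(B(t)ᵀQ(t)B(t))/α(t) dt. -/

import Mathlib

open Matrix MeasureTheory

private lemma cont_mul_entry {n m k : ℕ} {M : ℝ → Matrix (Fin n) (Fin m) ℝ}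
    {N : ℝ → Matrix (Fin m) (Fin k) ℝ}
    (hM : ∀ i j, Continuous fun t => M t i j)
    (hN : ∀ i j, Continuous fun t => N t i j) (i : Fin n) (j : Fin k) :
    Continuous fun t => (M t * N t) i j := by
  simp only [Matrix.mul_apply]
  exact continuous_finset_sum _ fun l _ => (hM i l).mul (hN l j)

private lemma cont_trace {n : ℕ} {M : ℝ → Matrix (Fin n) (Fin n) ℝ}
    (hM : ∀ i j, Continuous fun t => M t i j) :
    Continuous fun t => (M t).trace := by
  simp only [Matrix.trace, Matrix.diag]
  exact continuous_finset_sum _ fun i _ => hM i i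

theorem stmt_5 (n m k : ℕ) (T : ℝ) (hT : 0 < T)
    (A : ℝ → Matrix (Fin n) (Fin n) ℝ)
    (B : ℝ → Matrix (Fin n) (Fin m) ℝ)
    (C : ℝ → Matrix (Fin k) (Fin n) ℝ) (α : ℝ → ℝ)
    (hAcont : ∀ i j, Continuous fun t => A t i j)
    (hBcont : ∀ i j, Continuous fun t => B t i j)
    (hCcont : ∀ i j, Continuous fun t => C t i j)
    (hαcont : Continuous α) (hαpos : ∀ t, 0 < α t)
    (hAper : ∀ t, A (t + T) = A t) (hBper : ∀ t, B (t + T) = B t)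
    (hCper : ∀ t, C (t + T) = C t) (hαper : ∀ t, α (t + T) = α t)
    (P Q P' Q' : ℝ → Matrix (Fin n) (Fin n) ℝ)
    (hPdiff : ∀ t i j, HasDerivAt (fun s => P s i j) (P' t i j) t)
    (hQdiff : ∀ t i j, HasDerivAt (fun s => Q s i j) (Q' t i j) t)
    (hPper : ∀ t, P (t + T) = P t) (hQper : ∀ t, Q (t + T) = Q t)
    (hPeq : ∀ t, P' t = A t * P t + P t * (A t)ᵀ + α t • P t + (α t)⁻¹ • (B t * (B t)ᵀ))
    (hQeq : ∀ t, -Q' t = Q t * A t + (A t)ᵀ * Q t + α t • Q t + (C t)ᵀ * C t) :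
    (1 / T) * ∫ t in (0 : ℝ)..T, (C t * P t * (C t)ᵀ).trace =
      (1 / T) * ∫ t in (0 : ℝ)..T, ((B t)ᵀ * Q t * B t).trace / α t := by
  have hPc : ∀ i j, Continuous fun t => P t i j :=
    fun i j => continuous_iff_continuousAt.2 fun t => (hPdiff t i j).continuousAt
  have hQc : ∀ i j, Continuous fun t => Q t i j :=
    fun i j => continuous_iff_continuousAt.2 fun t => (hQdiff t i j).continuousAt
  have hCTc : ∀ i j, Continuous fun t => (C t)ᵀ i j := fun i j => hCcont j i
  have hBTc : ∀ i j, Continuous fun t => (B t)ᵀ i j := fun i j => hBcont j i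
  set u : ℝ → ℝ := fun t => (C t * P t * (C t)ᵀ).trace with hu
  set v : ℝ → ℝ := fun t => ((B t)ᵀ * Q t * B t).trace / α t with hv
  have huc : Continuous u := cont_trace (cont_mul_entry (cont_mul_entry hCcont hPc) hCTc)
  have hvc : Continuous v :=
    (cont_trace (cont_mul_entry (cont_mul_entry hBTc hQc) hBcont)).div hαcont
      (fun t => (hαpos t).ne')
  have hderiv : ∀ t, HasDerivAt (fun s => (Q s * P s).trace) (v t - u t) t := by
    intro t
    have key : HasDerivAt (fun s => ∑ i, ∑ j, Q s i j * P s j i)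
        (∑ i, ∑ j, (Q' t i j * P t j i + Q t i j * P' t j i)) t := by
      apply HasDerivAt.fun_sum; intro i _
      apply HasDerivAt.fun_sum; intro j _
      exact (hQdiff t i j).mul (hPdiff t j i)
    have h1 : (fun s => (Q s * P s).trace) = fun s => ∑ i, ∑ j, Q s i j * P s j i := by
      funext s; simp [Matrix.trace, Matrix.diag, Matrix.mul_apply]
    have h2 : (∑ i, ∑ j, (Q' t i j * P t j i + Q t i j * P' t j i))
        = (Q' t * P t).trace + (Q t * P' t).trace := by
      simp [Matrix.trace, Matrix.diag, Matrix.mul_apply, Finset.sum_add_distrib]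
    have h3 : (Q' t * P t).trace + (Q t * P' t).trace = v t - u t := by
      have hQ'eq : Q' t = -(Q t * A t + (A t)ᵀ * Q t + α t • Q t + (C t)ᵀ * C t) := by
        rw [← hQeq t, neg_neg]
      have ha : α t ≠ 0 := (hαpos t).ne'
      rw [hQ'eq, hPeq t]
      simp only [Matrix.neg_mul, Matrix.add_mul, Matrix.mul_add, Matrix.smul_mul,
        Matrix.mul_smul, Matrix.trace_add, Matrix.trace_neg, Matrix.trace_smul,
        smul_eq_mul, hv, hu]
      have e1 : (Q t * (A t * P t)).trace = (Q t * A t * P t).trace := by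
        rw [mul_assoc]
      have e2 : (Q t * (P t * (A t)ᵀ)).trace = ((A t)ᵀ * Q t * P t).trace := by
        rw [← mul_assoc, Matrix.trace_mul_cycle]
      have e3 : (Q t * (B t * (B t)ᵀ)).trace = ((B t)ᵀ * Q t * B t).trace := by
        rw [Matrix.trace_mul_comm, Matrix.mul_assoc, Matrix.trace_mul_comm]
      have e4 : ((C t)ᵀ * C t * P t).trace = (C t * P t * (C t)ᵀ).trace := by
        rw [Matrix.trace_mul_cycle, Matrix.trace_mul_cycle]
      rw [e1, e2, e3, e4]
      field_simp
      ring
    rw [h1] at *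
    have := key
    rw [h2, h3] at this
    exact this
  have hint : (∫ t in (0:ℝ)..T, (v t - u t)) =
      (Q T * P T).trace - (Q 0 * P 0).trace := by
    exact intervalIntegral.integral_eq_sub_of_hasDerivAt (fun t _ => hderiv t)
      ((hvc.sub huc).intervalIntegrable 0 T)
  have hzero : (∫ t in (0:ℝ)..T, (v t - u t)) = 0 := by
    rw [hint]
    have : Q T * P T = Q 0 * P 0 := by
      have h1 := hQper 0
      have h2 := hPper 0
      rw [zero_add] at h1 h2
      rw [h1, h2]
    rw [this, sub_self]
  have hsplit : (∫ t in (0:ℝ)..T, (v t - u t)) =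
      (∫ t in (0:ℝ)..T, v t) - ∫ t in (0:ℝ)..T, u t :=
    intervalIntegral.integral_sub (hvc.intervalIntegrable 0 T) (huc.intervalIntegrable 0 T)
  have : (∫ t in (0:ℝ)..T, u t) = ∫ t in (0:ℝ)..T, v t := by
    have := hsplit ▸ hzero
    linarith
  rw [show (∫ t in (0:ℝ)..T, (C t * P t * (C t)ᵀ).trace) = ∫ t in (0:ℝ)..T, u t from rfl,
    show (∫ t in (0:ℝ)..T, ((B t)ᵀ * Q t * B t).trace / α t) = ∫ t in (0:ℝ)..T, v t from rfl,
    this]
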